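/- The domain Ω_ρ = ρ(𝔻) is contained in the open disk {w ∈ ℂ : |w - 1| < π/2}; equivalently, |arcsinh(z)| < π/2 for every z ∈ 𝔻. -/

import Mathlib

open Complex

/-- Principal branch of the complex inverse hyperbolic sine. -/
noncomputable def carcsinh (z : ℂ) : ℂ := Complex.log (z + (1 + z ^ 2) ^ ((1 : ℂ) / 2))

/-- The function `ρ(z) = 1 + arcsinh z`. -/
noncomputable def ρ (z : ℂ) : ℂ := 1 + carcsinh z

/-- The open unit disk in `ℂ`. -/
def unitDisk : Set ℂ := {z : ℂ | ‖z‖ < 1}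

/-- The petal-shaped domain `Ω_ρ = ρ '' 𝔻`. -/
noncomputable def OmegaRho : Set ℂ := ρ '' unitDisk

/-- `Ω_ρ` is contained in the open disk `{w : |w - 1| < π/2}`; equivalently,
`|arcsinh z| < π/2` for all `z ∈ 𝔻`. -/
lemma re_one_add_sq_pos {u : ℂ} (hu : ‖u‖ < 1) : 0 < (1 + u ^ 2).re := by
  have h1 : |(u ^ 2).re| ≤ ‖u ^ 2‖ := Complex.abs_re_le_norm _
  have h2 : ‖u ^ 2‖ = ‖u‖ ^ 2 := by simp [map_pow]
  have h3 : ‖u‖ ^ 2 < 1 := by nlinarith [norm_nonneg u]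
  have := neg_abs_le ((u ^ 2).re)
  simp only [Complex.add_re, Complex.one_re]
  linarith
lemma mul_self_csqrt {w : ℂ} (hw : w ≠ 0) : (w ^ ((1:ℂ)/2)) * (w ^ ((1:ℂ)/2)) = w := by
  rw [← Complex.cpow_add _ _ hw]; norm_num

lemma re_csqrt_pos {w : ℂ} (hw : 0 < w.re) : 0 < (w ^ ((1:ℂ)/2)).re := by
  have hw0 : w ≠ 0 := fun h => by simp [h] at hw
  rw [Complex.cpow_def_of_ne_zero hw0, Complex.exp_re]
  have harg : |w.arg| < Real.pi / 2 := Complex.abs_arg_lt_pi_div_two_iff.mpr (Or.inl hw)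
  have him : (Complex.log w * ((1:ℂ)/2)).im = w.arg / 2 := by
    simp [Complex.mul_im, Complex.log_im]
    ring
  rw [him]
  have : |w.arg / 2| < Real.pi / 2 := by
    rw [abs_div]
    have : |w.arg| / |(2:ℝ)| < Real.pi / 2 := by
      rw [show |(2:ℝ)| = 2 by norm_num]
      nlinarith [Real.pi_pos, abs_nonneg w.arg]
    exact this
  have hcos : 0 < Real.cos (w.arg / 2) :=
    Real.cos_pos_of_mem_Ioo (Set.mem_Ioo.mpr (abs_lt.mp this))
  positivity

lemma one_add_sq_ne_zero {u : ℂ} (hu : ‖u‖ < 1) : (1 + u ^ 2) ≠ 0 :=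
  fun h => by simpa [h] using re_one_add_sq_pos hu

lemma csqrt_ne_zero {u : ℂ} (hu : ‖u‖ < 1) : (1 + u ^ 2) ^ ((1:ℂ)/2) ≠ 0 := by
  intro h
  have := mul_self_csqrt (one_add_sq_ne_zero hu)
  rw [h, mul_zero] at this
  exact one_add_sq_ne_zero hu this.symm

lemma re_add_csqrt_pos {u : ℂ} (hu : ‖u‖ < 1) :
    0 < (u + (1 + u ^ 2) ^ ((1:ℂ)/2)).re := by
  set s : ℂ := (1 + u ^ 2) ^ ((1:ℂ)/2) with hs_def
  have hs : s * s = 1 + u ^ 2 := mul_self_csqrt (one_add_sq_ne_zero hu)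
  have hsre : 0 < s.re := re_csqrt_pos (re_one_add_sq_pos hu)
  have key : (s - u) * (s + u) = 1 := by linear_combination hs
  have hsu : s + u ≠ 0 := by
    intro h; rw [h, mul_zero] at key; exact one_ne_zero key.symm
  have hinv : s - u = (s + u)⁻¹ := eq_inv_of_mul_eq_one_left key
  by_contra hle
  push_neg at hle
  have h1 : (u + s).re = (s + u).re := by rw [add_comm]
  have h2 : (s - u).re = (s + u).re / Complex.normSq (s + u) := by
    rw [hinv, Complex.inv_re]
  have hns : 0 < Complex.normSq (s + u) := Complex.normSq_pos.mpr hsu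
  have h3 : (s - u).re ≤ 0 := by
    rw [h2]
    apply div_nonpos_of_nonpos_of_nonneg _ hns.le
    rw [add_comm] at hle ⊢
    linarith [h1 ▸ hle]
  have := Complex.add_re s u
  have := Complex.sub_re s u
  rw [add_comm] at hle
  simp [Complex.add_re, Complex.sub_re] at hle h3
  linarith

lemma hasDerivAt_carcsinh {u : ℂ} (hu : ‖u‖ < 1) :
    HasDerivAt carcsinh (((1 + u ^ 2) ^ ((1:ℂ)/2))⁻¹) u := by
  set s : ℂ := (1 + u ^ 2) ^ ((1:ℂ)/2) with hs_def
  have hne : (1 + u ^ 2) ≠ 0 := one_add_sq_ne_zero hu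
  have hslit : (1 + u ^ 2) ∈ Complex.slitPlane := Or.inl (re_one_add_sq_pos hu)
  have hsne : s ≠ 0 := csqrt_ne_zero hu
  have h2 : HasDerivAt (fun w : ℂ => 1 + w ^ 2) (2 * u) u := by
    simpa using ((hasDerivAt_pow 2 u).const_add 1)
  have hpow : HasDerivAt (fun w : ℂ => (1 + w ^ 2) ^ ((1:ℂ)/2))
      (u * s⁻¹) u := by
    have h := h2.cpow_const (c := (1:ℂ)/2) hslit
    convert h using 1
    have : ((1:ℂ)/2 - 1) = -(1/2) := by norm_num
    rw [this, Complex.cpow_neg]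
    field_simp
    rw [← hs_def, mul_div_assoc, div_self hsne, mul_one]
  have hg : HasDerivAt (fun w : ℂ => w + (1 + w ^ 2) ^ ((1:ℂ)/2)) (1 + u * s⁻¹) u :=
    (hasDerivAt_id u).add hpow
  have hre : 0 < (u + s).re := re_add_csqrt_pos hu
  have husne : u + s ≠ 0 := fun h => by simp [h] at hre
  have hlog := hg.clog (Or.inl hre)
  have : (1 + u * s⁻¹) / (u + s) = s⁻¹ := by
    field_simp
    ring
  rw [this] at hlog
  exact hlog

lemma abs_carcsinh_le {z : ℂ} (hz : ‖z‖ < 1) :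
    ‖carcsinh z‖ ≤ Real.arcsin (‖z‖) := by
  set r : ℝ := ‖z‖ with hr_def
  have hr0 : 0 ≤ r := norm_nonneg z
  set f : ℝ → ℂ := fun t => carcsinh (↑t * z) with hf_def
  set F : ℝ → ℂ := fun t => z * (((1:ℂ) + (↑t * z) ^ 2) ^ ((1:ℂ)/2))⁻¹ with hF_def
  have habs : ∀ t ∈ Set.Icc (0:ℝ) 1, ‖↑t * z‖ < 1 := by
    intro t ht
    have h1 : ‖↑t * z‖ = |t| * r := by simp [map_mul, hr_def]
    rw [h1, _root_.abs_of_nonneg ht.1]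
    nlinarith [mul_nonneg (sub_nonneg.mpr ht.2) hr0]
  have hderiv : ∀ t ∈ Set.uIcc (0:ℝ) 1, HasDerivAt f (F t) t := by
    intro t ht
    rw [Set.uIcc_of_le (by norm_num : (0:ℝ) ≤ 1)] at ht
    have hmul : HasDerivAt (fun w : ℂ => w * z) z (↑t : ℂ) := hasDerivAt_mul_const z
    have h1 := (hasDerivAt_carcsinh (habs t ht)).comp (↑t : ℂ) hmul
    have h2 := h1.comp_ofReal
    simp only [Function.comp] at h2
    simpa only [hf_def, hF_def, mul_comm z] using h2
  have hcont : ContinuousOn F (Set.uIcc (0:ℝ) 1) := by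
    rw [Set.uIcc_of_le (by norm_num : (0:ℝ) ≤ 1)]
    intro t ht
    apply ContinuousAt.continuousWithinAt
    have hbase : ContinuousAt (fun t : ℝ => (1:ℂ) + (↑t * z) ^ 2) t := by fun_prop
    have hcp : ContinuousAt (fun t : ℝ => ((1:ℂ) + (↑t * z) ^ 2) ^ ((1:ℂ)/2)) t :=
      hbase.cpow continuousAt_const (Or.inl (re_one_add_sq_pos (habs t ht)))
    exact continuousAt_const.mul (hcp.inv₀ (csqrt_ne_zero (habs t ht)))
  have hint : IntervalIntegrable F MeasureTheory.volume 0 1 :=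
    hcont.intervalIntegrable
  have hftc := intervalIntegral.integral_eq_sub_of_hasDerivAt hderiv hint
  have hf1 : f 1 = carcsinh z := by simp [hf_def]
  have hf0 : f 0 = 0 := by simp [hf_def, carcsinh, Complex.one_cpow]
  have hkey : carcsinh z = ∫ t in (0:ℝ)..1, F t := by
    rw [hftc, hf1, hf0, sub_zero]
  set G : ℝ → ℝ := fun t => 1 / Real.sqrt (1 - (t * r) ^ 2) * r with hG_def
  have hGderiv : ∀ t ∈ Set.uIcc (0:ℝ) 1,
      HasDerivAt (fun t : ℝ => Real.arcsin (t * r)) (G t) t := by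
    intro t ht
    rw [Set.uIcc_of_le (by norm_num : (0:ℝ) ≤ 1)] at ht
    have htr : |t * r| < 1 := by
      rw [abs_mul, _root_.abs_of_nonneg ht.1, _root_.abs_of_nonneg hr0]
      nlinarith [mul_nonneg (sub_nonneg.mpr ht.2) hr0]
    have h₁ : t * r ≠ -1 := by intro h; rw [h] at htr; norm_num at htr
    have h₂ : t * r ≠ 1 := by intro h; rw [h] at htr; norm_num at htr
    exact (Real.hasDerivAt_arcsin h₁ h₂).comp t (hasDerivAt_mul_const r)
  have htrsq : ∀ t ∈ Set.Icc (0:ℝ) 1, (t * r) ^ 2 < 1 := by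
    intro t ht
    have h1 : 0 ≤ t * r := mul_nonneg ht.1 hr0
    have h2 : t * r ≤ r := by nlinarith [mul_nonneg (sub_nonneg.mpr ht.2) hr0]
    nlinarith
  have hGcont : ContinuousOn G (Set.uIcc (0:ℝ) 1) := by
    rw [Set.uIcc_of_le (by norm_num : (0:ℝ) ≤ 1)]
    intro t ht
    apply ContinuousAt.continuousWithinAt
    have hpos : 0 < Real.sqrt (1 - (t * r) ^ 2) :=
      Real.sqrt_pos.mpr (by linarith [htrsq t ht])
    have hc : ContinuousAt (fun t : ℝ => Real.sqrt (1 - (t * r) ^ 2)) t := by fun_prop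
    exact ((continuousAt_const.div hc hpos.ne')).mul continuousAt_const
  have hGint : IntervalIntegrable G MeasureTheory.volume 0 1 := hGcont.intervalIntegrable
  have hGftc := intervalIntegral.integral_eq_sub_of_hasDerivAt hGderiv hGint
  have hGval : (∫ t in (0:ℝ)..1, G t) = Real.arcsin r := by
    rw [hGftc]; simp
  have hle : ∀ t ∈ Set.Icc (0:ℝ) 1, ‖F t‖ ≤ G t := by
    intro t ht
    have htz := habs t ht
    set s : ℂ := ((1:ℂ) + (↑t * z) ^ 2) ^ ((1:ℂ)/2) with hs_def
    have hsabs : ‖s‖ = Real.sqrt (‖1 + (↑t * z) ^ 2‖) := by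
      have hmul : ‖s‖ * ‖s‖ = ‖1 + (↑t * z) ^ 2‖ := by
        rw [← norm_mul, mul_self_csqrt (one_add_sq_ne_zero htz)]
      rw [← hmul, Real.sqrt_mul_self (norm_nonneg s)]
    have habs2 : (1 : ℝ) - (t * r) ^ 2 ≤ ‖1 + (↑t * z) ^ 2‖ := by
      have h1 : ‖(↑t * z) ^ 2‖ = (t * r) ^ 2 := by
        simp [map_pow, map_mul, _root_.abs_of_nonneg ht.1, hr_def, mul_pow]
      have htri : (1:ℝ) ≤ ‖1 + (↑t * z) ^ 2‖ + ‖(↑t * z) ^ 2‖ := by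
        have := norm_add_le (1 + (↑t * z) ^ 2) (-(↑t * z) ^ 2)
        simpa using this
      rw [h1] at htri
      linarith
    have htr2 : (0:ℝ) < 1 - (t * r) ^ 2 := by linarith [htrsq t ht]
    have hFabs : ‖F t‖ = r * (‖s‖)⁻¹ := by
      show ‖z * s⁻¹‖ = r * (‖s‖)⁻¹
      rw [norm_mul, norm_inv]
    have hGt : G t = r * (Real.sqrt (1 - (t * r) ^ 2))⁻¹ := by
      show 1 / Real.sqrt (1 - (t * r) ^ 2) * r = _
      rw [one_div]; ring
    rw [hFabs, hsabs, hGt]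
    exact mul_le_mul_of_nonneg_left
      (inv_anti₀ (Real.sqrt_pos.mpr htr2) (Real.sqrt_le_sqrt habs2)) hr0
  calc ‖carcsinh z‖ = ‖∫ t in (0:ℝ)..1, F t‖ := by
        rw [hkey]
    _ ≤ ∫ t in (0:ℝ)..1, ‖F t‖ :=
        intervalIntegral.norm_integral_le_integral_norm (by norm_num)
    _ ≤ ∫ t in (0:ℝ)..1, G t :=
        intervalIntegral.integral_mono_on (by norm_num) hint.norm hGint hle
    _ = Real.arcsin r := hGval

theorem OmegaRho_subset_disk :
    OmegaRho ⊆ {w : ℂ | ‖w - 1‖ < Real.pi / 2} ∧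
    ∀ z ∈ unitDisk, ‖carcsinh z‖ < Real.pi / 2 := by
  have main : ∀ z ∈ unitDisk, ‖carcsinh z‖ < Real.pi / 2 := by
    intro z hz
    have h1 : ‖carcsinh z‖ ≤ Real.arcsin (‖z‖) := abs_carcsinh_le hz
    have h2 : Real.arcsin (‖z‖) < Real.pi / 2 :=
      Real.arcsin_lt_pi_div_two.mpr hz
    linarith
  refine ⟨?_, main⟩
  rintro w ⟨z, hz, rfl⟩
  simpa [ρ] using main z hz
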